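/- arXiv:1702.05635 — 2 statements merged into one kernel-verified Lean document; each statement's English description precedes it below -/
import Mathlib

section
/- For all real x > 0, the inequality 1/(2x) - 1/(12x^2) < ψ(x+1) - log(x) < 1/(2x) holds, where ψ is the digamma function. -/
open Real MeasureTheory Filter

/-- The digamma function: logarithmic derivative of the Gamma function. -/
noncomputable def digamma (x : ℝ) : ℝ := deriv (fun y => Real.log (Real.Gamma y)) x

open Topology Set Finset

private lemma pos_of_deriv_neg_tendsto {φ φ' : ℝ → ℝ}
    (hd : ∀ t, 0 < t → HasDerivAt φ (φ' t) t) (hneg : ∀ t, 0 < t → φ' t < 0)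
    (hlim : Tendsto φ atTop (𝓝 0)) {t : ℝ} (ht : 0 < t) : 0 < φ t := by
  have hanti : StrictAntiOn φ (Set.Ioi 0) := by
    apply strictAntiOn_of_deriv_neg (convex_Ioi 0)
    · exact fun s hs => (hd s hs).continuousAt.continuousWithinAt
    · intro s hs
      rw [interior_Ioi] at hs
      rw [(hd s hs).deriv]
      exact hneg s hs
  have h1 : 0 ≤ φ (t + 1) := by
    refine le_of_tendsto hlim ?_
    filter_upwards [eventually_ge_atTop (t + 1)] with s hs
    rcases eq_or_lt_of_le hs with h | h
    · rw [← h]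
    · exact (hanti (Set.mem_Ioi.mpr (by linarith)) (Set.mem_Ioi.mpr (by linarith)) h).le
  calc (0:ℝ) ≤ φ (t + 1) := h1
    _ < φ t := hanti (Set.mem_Ioi.mpr ht) (Set.mem_Ioi.mpr (by linarith)) (by linarith)

private lemma tendsto_log_ratio :
    Tendsto (fun t : ℝ => Real.log (t + 1) - Real.log t) atTop (𝓝 0) := by
  have h1 : Tendsto (fun t : ℝ => (t + 1) / t) atTop (𝓝 1) := by
    have h : Tendsto (fun t : ℝ => 1 + t⁻¹) atTop (𝓝 (1 + 0)) :=
      tendsto_const_nhds.add tendsto_inv_atTop_zero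
    rw [add_zero] at h
    refine h.congr' ?_
    filter_upwards [eventually_gt_atTop (0:ℝ)] with t ht
    field_simp
  have h2 : Tendsto (fun t : ℝ => Real.log ((t + 1) / t)) atTop (𝓝 0) := by
    have := (Real.continuousAt_log one_ne_zero).tendsto.comp h1
    simpa [Function.comp_def] using this
  refine h2.congr' ?_
  filter_upwards [eventually_gt_atTop (0:ℝ)] with t ht
  rw [Real.log_div (by linarith) ht.ne']

private lemma tendsto_half_inv : Tendsto (fun t : ℝ => (2 * t)⁻¹) atTop (𝓝 0) :=
  tendsto_inv_atTop_zero.comp (tendsto_id.const_mul_atTop two_pos)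

private lemma tendsto_add_one : Tendsto (fun t : ℝ => t + 1) atTop atTop :=
  tendsto_atTop_add_const_right _ 1 tendsto_id

private lemma tendsto_twelve_sq : Tendsto (fun t : ℝ => (12 * t ^ 2)⁻¹) atTop (𝓝 0) :=
  tendsto_inv_atTop_zero.comp ((tendsto_pow_atTop two_ne_zero).const_mul_atTop (by norm_num))

/-- Upper key inequality: `log(t+1) - log t - 1/(t+1) < 1/(2t) - 1/(2(t+1))` for `t > 0`. -/
private lemma key_upper {t : ℝ} (ht : 0 < t) :
    Real.log (t + 1) - Real.log t - 1 / (t + 1) < 1 / (2 * t) - 1 / (2 * (t + 1)) := by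
  have key : ∀ s : ℝ, 0 < s →
      0 < (2 * s)⁻¹ + (2 * (s + 1))⁻¹ - (Real.log (s + 1) - Real.log s) := by
    intro s hs
    refine pos_of_deriv_neg_tendsto
      (φ := fun s => (2 * s)⁻¹ + (2 * (s + 1))⁻¹ - (Real.log (s + 1) - Real.log s))
      (φ' := fun s => -(1 / (2 * s ^ 2 * (s + 1) ^ 2)))
      (fun u hu => ?_) (fun u hu => neg_neg_of_pos (by positivity)) ?_ hs
    · have h0 : HasDerivAt (fun y : ℝ => y + 1) 1 u := (hasDerivAt_id u).add_const 1
      have h1 : HasDerivAt (fun y : ℝ => (2 * y)⁻¹) (-2 / (2 * u) ^ 2) u := by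
        simpa only [id_eq, mul_one] using ((hasDerivAt_id u).const_mul 2).fun_inv (by positivity)
      have h2 : HasDerivAt (fun y : ℝ => (2 * (y + 1))⁻¹) (-2 / (2 * (u + 1)) ^ 2) u := by
        simpa only [mul_one] using (h0.const_mul 2).fun_inv (by positivity)
      have h3 : HasDerivAt (fun y : ℝ => Real.log (y + 1)) (1 / (u + 1)) u := by
        simpa using h0.log (by positivity)
      have h4 : HasDerivAt Real.log u⁻¹ u := Real.hasDerivAt_log hu.ne'
      have hc := (h1.add h2).sub (h3.sub h4)
      refine hc.congr_deriv ?_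
      have hu1 : (0:ℝ) < u + 1 := by linarith
      field_simp
      ring
    · have hc := (tendsto_half_inv.add (tendsto_half_inv.comp tendsto_add_one)).sub
        tendsto_log_ratio
      simpa [Function.comp] using hc
  have := key t ht
  have h1 : (2 * t)⁻¹ = 1 / (2 * t) := by rw [one_div]
  have h2 : (2 * (t + 1))⁻¹ = 1 / (2 * (t + 1)) := by rw [one_div]
  have h5 : 1 / (2 * (t + 1)) + 1 / (2 * (t + 1)) = 1 / (t + 1) := by
    rw [← add_div]
    rw [show (2:ℝ) * (t + 1) = (t + 1) * 2 by ring]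
    rw [div_mul_eq_div_div_swap]
    norm_num
  linarith

/-- Lower key inequality. -/
private lemma key_lower {t : ℝ} (ht : 0 < t) :
    (1 / (2 * t) - 1 / (12 * t ^ 2)) - (1 / (2 * (t + 1)) - 1 / (12 * (t + 1) ^ 2)) <
      Real.log (t + 1) - Real.log t - 1 / (t + 1) := by
  have key : ∀ s : ℝ, 0 < s →
      0 < (Real.log (s + 1) - Real.log s) - (2 * s)⁻¹ - (2 * (s + 1))⁻¹
          + (12 * s ^ 2)⁻¹ - (12 * (s + 1) ^ 2)⁻¹ := by
    intro s hs
    refine pos_of_deriv_neg_tendsto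
      (φ := fun s => (Real.log (s + 1) - Real.log s) - (2 * s)⁻¹ - (2 * (s + 1))⁻¹
          + (12 * s ^ 2)⁻¹ - (12 * (s + 1) ^ 2)⁻¹)
      (φ' := fun s => -(1 / (6 * s ^ 3 * (s + 1) ^ 3)))
      (fun u hu => ?_) (fun u hu => neg_neg_of_pos (by positivity)) ?_ hs
    · have hu1 : (0:ℝ) < u + 1 := by linarith
      have h0 : HasDerivAt (fun y : ℝ => y + 1) 1 u := (hasDerivAt_id u).add_const 1
      have h1 : HasDerivAt (fun y : ℝ => (2 * y)⁻¹) (-2 / (2 * u) ^ 2) u := by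
        simpa only [id_eq, mul_one] using ((hasDerivAt_id u).const_mul 2).fun_inv (by positivity)
      have h2 : HasDerivAt (fun y : ℝ => (2 * (y + 1))⁻¹) (-2 / (2 * (u + 1)) ^ 2) u := by
        simpa only [mul_one] using (h0.const_mul 2).fun_inv (by positivity)
      have h3 : HasDerivAt (fun y : ℝ => Real.log (y + 1)) (1 / (u + 1)) u := by
        simpa using h0.log (by positivity)
      have h4 : HasDerivAt Real.log u⁻¹ u := Real.hasDerivAt_log hu.ne'
      have h5 : HasDerivAt (fun y : ℝ => (12 * y ^ 2)⁻¹)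
          (-(12 * (2 * u)) / (12 * u ^ 2) ^ 2) u := by
        have := ((hasDerivAt_pow 2 u).const_mul 12).inv (by positivity)
        refine this.congr_deriv ?_
        all_goals ring
      have h6 : HasDerivAt (fun y : ℝ => (12 * (y + 1) ^ 2)⁻¹)
          (-(12 * (2 * (u + 1))) / (12 * (u + 1) ^ 2) ^ 2) u := by
        have hp : HasDerivAt (fun y : ℝ => (y + 1) ^ 2) (2 * (u + 1)) u := by
          simpa using h0.fun_pow 2
        exact (hp.const_mul 12).inv (by positivity)
      have hc := ((((h3.sub h4).sub h1).sub h2).add h5).sub h6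
      refine hc.congr_deriv ?_
      field_simp
      ring
    · have hc := ((((tendsto_log_ratio.sub tendsto_half_inv).sub
        (tendsto_half_inv.comp tendsto_add_one)).add tendsto_twelve_sq).sub
        (tendsto_twelve_sq.comp tendsto_add_one))
      simpa [Function.comp] using hc
  have := key t ht
  have h1 : (2 * t)⁻¹ = 1 / (2 * t) := by rw [one_div]
  have h2 : (2 * (t + 1))⁻¹ = 1 / (2 * (t + 1)) := by rw [one_div]
  have h3 : (12 * t ^ 2)⁻¹ = 1 / (12 * t ^ 2) := by rw [one_div]
  have h4 : (12 * (t + 1) ^ 2)⁻¹ = 1 / (12 * (t + 1) ^ 2) := by rw [one_div]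
  have h5 : 1 / (2 * (t + 1)) + 1 / (2 * (t + 1)) = 1 / (t + 1) := by
    rw [← add_div]
    rw [show (2:ℝ) * (t + 1) = (t + 1) * 2 by ring]
    rw [div_mul_eq_div_div_swap]
    norm_num
  linarith

private lemma gamma_log_diff {y : ℝ} (hy : 0 < y) :
    DifferentiableAt ℝ (Real.log ∘ Real.Gamma) y := by
  refine (Real.differentiableAt_Gamma fun m => ?_).log (Real.Gamma_pos_of_pos hy).ne'
  have : (0:ℝ) ≤ m := Nat.cast_nonneg m
  intro h
  rw [h] at hy
  linarith

private lemma log_gamma_rec {y : ℝ} (hy : 0 < y) :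
    (Real.log ∘ Real.Gamma) (y + 1) = (Real.log ∘ Real.Gamma) y + Real.log y := by
  simp only [Function.comp_apply, Real.Gamma_add_one hy.ne',
    Real.log_mul hy.ne' (Real.Gamma_pos_of_pos hy).ne', add_comm]

private lemma digamma_eq (y : ℝ) : digamma y = deriv (Real.log ∘ Real.Gamma) y := rfl

private lemma digamma_rec {y : ℝ} (hy : 0 < y) : digamma (y + 1) = digamma y + 1 / y := by
  rw [digamma_eq, digamma_eq]
  rw [← deriv_comp_add_const, one_div, ← Real.deriv_log,
    ← deriv_add (gamma_log_diff hy) (Real.differentiableAt_log hy.ne')]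
  apply EventuallyEq.deriv_eq
  filter_upwards [eventually_gt_nhds hy] using fun z hz => log_gamma_rec hz

private lemma digamma_lb {y : ℝ} (hy : 0 < y) : Real.log y ≤ digamma (y + 1) := by
  rw [digamma_eq]
  refine (le_of_eq ?_).trans <| Real.convexOn_log_Gamma.slope_le_deriv
    (Set.mem_Ioi.mpr hy) (Set.mem_Ioi.mpr (by linarith)) (by linarith)
    (gamma_log_diff (by linarith))
  rw [slope_def_field, show y + 1 - y = (1:ℝ) by ring, div_one, log_gamma_rec hy,
    add_sub_cancel_left]

private lemma digamma_ub {y : ℝ} (hy : 0 < y) : digamma (y + 1) ≤ Real.log (y + 1) := by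
  rw [digamma_eq]
  refine (Real.convexOn_log_Gamma.deriv_le_slope (Set.mem_Ioi.mpr (by linarith : (0:ℝ) < y + 1))
    (Set.mem_Ioi.mpr (by linarith : (0:ℝ) < y + 2)) (by linarith)
    (gamma_log_diff (by linarith))).trans (le_of_eq ?_)
  rw [slope_def_field, show y + 2 - (y + 1) = (1:ℝ) by ring, div_one,
    show y + 2 = (y + 1) + 1 by ring, log_gamma_rec (by linarith : (0:ℝ) < y + 1),
    add_sub_cancel_left]

private lemma digamma_nonstrict {x : ℝ} (hx : 0 < x) :
    1 / (2 * x) - 1 / (12 * x ^ 2) ≤ digamma (x + 1) - Real.log x ∧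
      digamma (x + 1) - Real.log x ≤ 1 / (2 * x) := by
  set g : ℝ → ℝ := fun t => Real.log (t + 1) - Real.log t - 1 / (t + 1) with hg
  set S : ℕ → ℝ := fun n => ∑ k ∈ Finset.range n, g (x + k) with hSdef
  have hpos : ∀ n : ℕ, (0:ℝ) < x + n := fun n => by positivity
  -- identity : digamma (x+n+1) - log (x+n) = digamma (x+1) - log x - S n
  have hE : ∀ n : ℕ, digamma (x + n + 1) - Real.log (x + n)
      = digamma (x + 1) - Real.log x - S n := by
    intro n
    induction n with
    | zero => simp [hSdef]
    | succ n ih =>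
      have hrec : digamma ((x + n + 1) + 1) = digamma (x + n + 1) + 1 / (x + n + 1) :=
        digamma_rec (by positivity)
      have hcast : (x : ℝ) + (n + 1 : ℕ) = x + n + 1 := by push_cast; ring
      have hS : S (n + 1) = S n + g (x + n) := by
        rw [hSdef]; exact Finset.sum_range_succ _ n
      rw [hcast, show x + n + 1 + 1 = (x + n + 1) + 1 by ring, hrec, hS, hg]
      simp only at ih ⊢
      linarith [ih]
  -- E n → 0
  have hE0 : Tendsto (fun n : ℕ => digamma (x + n + 1) - Real.log (x + n)) atTop (𝓝 0) := by
    apply squeeze_zero (fun n => by linarith [digamma_lb (hpos n)])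
      (g := fun n : ℕ => 1 / (x + n))
    · intro n
      have h1 := digamma_ub (hpos n)
      have h2 : Real.log (x + n + 1) - Real.log (x + n) ≤ 1 / (x + n) := by
        have := Real.log_le_sub_one_of_pos (show (0:ℝ) < (x + n + 1) / (x + n) by positivity)
        rw [Real.log_div (by positivity) (hpos n).ne'] at this
        have heq : (x + n + 1) / (x + n) - 1 = 1 / (x + n) := by
          field_simp
          ring
        linarith [this, heq ▸ this]
      linarith
    · have : Tendsto (fun n : ℕ => (x + (n:ℝ))⁻¹) atTop (𝓝 0) :=
        tendsto_inv_atTop_zero.comp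
          (tendsto_atTop_add_const_left _ x tendsto_natCast_atTop_atTop)
      simpa [one_div] using this
  have hS : Tendsto S atTop (𝓝 (digamma (x + 1) - Real.log x)) := by
    have := Tendsto.const_sub (digamma (x + 1) - Real.log x) hE0
    rw [sub_zero] at this
    refine this.congr fun n => ?_
    rw [hE n]; ring
  constructor
  · -- lower bound
    set L : ℝ → ℝ := fun t => 1 / (2 * t) - 1 / (12 * t ^ 2) with hL
    have hLlim : Tendsto (fun n : ℕ => L x - L (x + n)) atTop (𝓝 (L x)) := by
      have h1 : Tendsto (fun n : ℕ => L (x + n)) atTop (𝓝 0) := by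
        have ha : Tendsto (fun n : ℕ => x + (n:ℝ)) atTop atTop :=
          tendsto_atTop_add_const_left _ x tendsto_natCast_atTop_atTop
        have := (tendsto_half_inv.comp ha).sub (tendsto_twelve_sq.comp ha)
        simpa [hL, one_div, Function.comp] using this
      have := Tendsto.const_sub (L x) h1
      simpa using this
    refine le_of_tendsto_of_tendsto' hLlim hS fun n => ?_
    have hterm : ∀ k ∈ Finset.range n, L (x + k) - L (x + (k + 1 : ℕ)) ≤ g (x + k) := by
      intro k _
      have := key_lower (hpos k)
      have hc : (x : ℝ) + (k + 1 : ℕ) = x + k + 1 := by push_cast; ring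
      rw [hc]
      simp only [hL, hg]
      linarith
    calc L x - L (x + n) = ∑ k ∈ Finset.range n, (L (x + k) - L (x + (k + 1 : ℕ))) := by
          rw [Finset.sum_range_sub' (fun k => L (x + k)) n]
          simp
      _ ≤ S n := Finset.sum_le_sum hterm
  · -- upper bound
    set H : ℝ → ℝ := fun t => 1 / (2 * t) with hH
    refine le_of_tendsto hS (Eventually.of_forall fun n => ?_)
    have hterm : ∀ k ∈ Finset.range n, g (x + k) ≤ H (x + k) - H (x + (k + 1 : ℕ)) := by
      intro k _
      have := key_upper (hpos k)
      have hc : (x : ℝ) + (k + 1 : ℕ) = x + k + 1 := by push_cast; ring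
      rw [hc]
      simp only [hH, hg]
      linarith
    calc S n ≤ ∑ k ∈ Finset.range n, (H (x + k) - H (x + (k + 1 : ℕ))) :=
          Finset.sum_le_sum hterm
      _ = H x - H (x + n) := by
          rw [Finset.sum_range_sub' (fun k => H (x + k)) n]
          simp
      _ ≤ H x := by
          have : 0 < H (x + n) := by
            simp only [hH]
            positivity
          linarith
      _ = 1 / (2 * x) := rfl

theorem digamma_log_bounds (x : ℝ) (hx : 0 < x) :
    1 / (2 * x) - 1 / (12 * x ^ 2) < digamma (x + 1) - Real.log x ∧
      digamma (x + 1) - Real.log x < 1 / (2 * x) := by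
  have hx1 : (0:ℝ) < x + 1 := by linarith
  have hrec : digamma ((x + 1) + 1) = digamma (x + 1) + 1 / (x + 1) := digamma_rec hx1
  have hns := digamma_nonstrict hx1
  have hku := key_upper hx
  have hkl := key_lower hx
  constructor
  · linarith [hns.1, hkl, hrec]
  · linarith [hns.2, hku, hrec]
end

section
/- For y > 0, the lower bound c₁² · 2√y / (√π · erfi(√y)) ≤ ∫_0^1 (ψ(t+1) - log t) e^{-y t^2} dt holds, where c₁ = ∫_0^1 sqrt(ψ(t+1) - log t) dt and erfi(x) = -i·erf(ix), i.e., erfi(√y) = (2/√π) ∫_0^{√y} e^{u^2} du. -/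
open Real MeasureTheory Filter

/-- The imaginary error function. -/
noncomputable def erfi (x : ℝ) : ℝ := (2 / Real.sqrt π) * ∫ t in (0:ℝ)..x, Real.exp (t ^ 2)

lemma hasDerivAt_logGamma {x : ℝ} (hx : 0 < x) :
    HasDerivAt (fun y => Real.log (Real.Gamma y)) (digamma x) x := by
  have hne : ∀ m : ℕ, x ≠ -m := fun m => by
    have : (0:ℝ) ≤ m := Nat.cast_nonneg m
    intro h; rw [h] at hx; linarith
  have hd : DifferentiableAt ℝ (fun y => Real.log (Real.Gamma y)) x :=
    (Real.differentiableAt_Gamma hne).log (Real.Gamma_pos_of_pos hx).ne'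
  exact hd.hasDerivAt

lemma log_le_digamma {t : ℝ} (ht : 0 < t) : Real.log t ≤ digamma (t + 1) := by
  have hcv := Real.convexOn_log_Gamma
  have h1 : t ∈ Set.Ioi (0:ℝ) := ht
  have h2 : t + 1 ∈ Set.Ioi (0:ℝ) := by simp [Set.mem_Ioi]; linarith
  have hd : DifferentiableAt ℝ (Real.log ∘ Real.Gamma) (t + 1) :=
    (hasDerivAt_logGamma (by linarith : (0:ℝ) < t + 1)).differentiableAt
  have := hcv.slope_le_deriv h1 h2 (by linarith) hd
  have hslope : slope (Real.log ∘ Real.Gamma) t (t + 1) = Real.log t := by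
    rw [slope_def_field]
    simp only [Function.comp_apply]
    rw [Real.Gamma_add_one ht.ne', Real.log_mul ht.ne' (Real.Gamma_pos_of_pos ht).ne']
    field_simp
    ring
  have hder : deriv (Real.log ∘ Real.Gamma) (t + 1) = digamma (t + 1) := rfl
  rw [hslope, hder] at this
  exact this

lemma integrableOn_f : IntegrableOn (fun t => digamma (t + 1) - Real.log t) (Set.Ioc 0 1) volume := by
  have := intervalIntegral.integrableOn_deriv_of_nonneg (g := fun t => Real.log (Real.Gamma (t + 1)) - (t * Real.log t - t))
    (g' := fun t => digamma (t + 1) - Real.log t) (a := 0) (b := 1) ?_ ?_ ?_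
  · exact this
  · apply ContinuousOn.sub
    · intro t ht
      have h1 : (0:ℝ) < t + 1 := by have := ht.1; linarith
      have hadd : ContinuousAt (fun s : ℝ => s + 1) t := by fun_prop
      exact (ContinuousAt.comp (g := fun y : ℝ => Real.log (Real.Gamma y)) (f := fun s : ℝ => s + 1)
        ((hasDerivAt_logGamma h1).differentiableAt.continuousAt) hadd).continuousWithinAt
    · exact (Real.continuous_mul_log.sub continuous_id).continuousOn
  · intro t ht
    have h1 : HasDerivAt (fun t : ℝ => Real.log (Real.Gamma (t + 1))) (digamma (t + 1)) t := by
      have := (hasDerivAt_logGamma (by linarith [ht.1] : (0:ℝ) < t + 1)).comp t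
        ((hasDerivAt_id t).add_const 1)
      rw [mul_one] at this; exact this
    have h2 : HasDerivAt (fun t : ℝ => t * Real.log t - t) (Real.log t) t := by
      have := (Real.hasDerivAt_mul_log ht.1.ne').sub (hasDerivAt_id t)
      rw [add_sub_cancel_right] at this; exact this
    exact h1.sub h2
  · intro t ht
    have := log_le_digamma ht.1
    linarith

theorem hardy_integral_lower_piece (y : ℝ) (hy : 0 < y) :
    (∫ t in Set.Ioo (0 : ℝ) 1, Real.sqrt (digamma (t + 1) - Real.log t)) ^ 2 *
        (2 * Real.sqrt y) / (Real.sqrt π * erfi (Real.sqrt y)) ≤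
      ∫ t in Set.Ioo (0 : ℝ) 1, (digamma (t + 1) - Real.log t) * Real.exp (-y * t ^ 2) := by
  set f : ℝ → ℝ := fun t => digamma (t + 1) - Real.log t with hf
  set μ : Measure ℝ := volume.restrict (Set.Ioo 0 1) with hμ
  have hfnn : ∀ t ∈ Set.Ioo (0:ℝ) 1, 0 ≤ f t := fun t ht => by
    have := log_le_digamma ht.1; simp only [hf]; linarith
  have hfint : IntegrableOn f (Set.Ioo 0 1) volume :=
    integrableOn_f.mono_set Set.Ioo_subset_Ioc_self
  set g : ℝ → ℝ := fun t => Real.sqrt (f t) * Real.exp (-(y * t ^ 2) / 2) with hg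
  set h : ℝ → ℝ := fun t => Real.exp ((y * t ^ 2) / 2) with hh
  have hgh : ∀ t, g t * h t = Real.sqrt (f t) := fun t => by
    rw [hg, hh]
    simp only []
    rw [mul_assoc, ← Real.exp_add, (by ring : -(y * t ^ 2) / 2 + y * t ^ 2 / 2 = 0),
      Real.exp_zero, mul_one]
  have hgsq : ∀ t ∈ Set.Ioo (0:ℝ) 1, g t ^ 2 = f t * Real.exp (-y * t ^ 2) := fun t ht => by
    simp only [hg]
    rw [mul_pow, Real.sq_sqrt (hfnn t ht), sq, ← Real.exp_add]
    ring_nf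
  have hhsq : ∀ t, h t ^ 2 = Real.exp (y * t ^ 2) := fun t => by
    simp only [hh]; rw [sq, ← Real.exp_add]; ring_nf
  -- integrability facts
  have hBint : Integrable (fun t => f t * Real.exp (-y * t ^ 2)) μ := by
    have : Integrable (fun t => Real.exp (-y * t ^ 2) * f t) μ :=
      (hfint).bdd_mul (by fun_prop : Continuous fun t : ℝ =>
        Real.exp (-y * t ^ 2)).aestronglyMeasurable (c := 1) (Filter.Eventually.of_forall fun t => by
        rw [Real.norm_eq_abs, abs_of_pos (Real.exp_pos _)]
        exact Real.exp_le_one_iff.mpr (by nlinarith [sq_nonneg t]))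
    simpa [mul_comm] using this
  have hCint : Integrable (fun t => Real.exp (y * t ^ 2)) μ := by
    have : IntegrableOn (fun t => Real.exp (y * t ^ 2)) (Set.Icc 0 1) volume :=
      (by fun_prop : Continuous fun t : ℝ => Real.exp (y * t ^ 2)).integrableOn_Icc
    exact this.mono_set Set.Ioo_subset_Icc_self
  have hgm : AEStronglyMeasurable g μ :=
    (Real.continuous_sqrt.comp_aestronglyMeasurable hfint.aestronglyMeasurable).mul
      (by fun_prop : Continuous fun t : ℝ => Real.exp (-(y * t ^ 2) / 2)).aestronglyMeasurable
  have hgmem : MemLp g 2 μ := by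
    refine (memLp_two_iff_integrable_sq hgm).mpr ?_
    refine hBint.congr ?_
    filter_upwards [ae_restrict_mem measurableSet_Ioo] with t ht
    exact (hgsq t ht).symm
  have hhmem : MemLp h 2 μ := by
    refine (memLp_two_iff_integrable_sq
      (by fun_prop : Continuous h).aestronglyMeasurable).mpr ?_
    exact hCint.congr (Filter.Eventually.of_forall fun t => (hhsq t).symm)
  -- Hölder / Cauchy–Schwarz
  have hpq : Real.HolderConjugate 2 2 := Real.HolderConjugate.two_two
  have h2 : ENNReal.ofReal (2:ℝ) = 2 := by norm_num
  rw [← h2] at hgmem hhmem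
  have key := MeasureTheory.integral_mul_le_Lp_mul_Lq_of_nonneg hpq
    (Filter.Eventually.of_forall fun t => mul_nonneg (Real.sqrt_nonneg _) (Real.exp_pos _).le)
    (Filter.Eventually.of_forall fun t => (Real.exp_pos _).le) hgmem hhmem
  set A : ℝ := ∫ t in Set.Ioo (0:ℝ) 1, Real.sqrt (f t) with hA
  set B : ℝ := ∫ t in Set.Ioo (0:ℝ) 1, f t * Real.exp (-y * t ^ 2) with hB
  set C : ℝ := ∫ t in Set.Ioo (0:ℝ) 1, Real.exp (y * t ^ 2) with hC
  have hrpow : ∀ x : ℝ, x ^ (2:ℝ) = x ^ (2:ℕ) := fun x => by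
    rw [show (2:ℝ) = ((2:ℕ):ℝ) by norm_num, Real.rpow_natCast]
  have hgint : ∫ a, g a * h a ∂μ = A := by
    rw [hA]; exact integral_congr_ae (Filter.Eventually.of_forall fun t => hgh t)
  have hgint2 : ∫ a, g a ^ (2:ℝ) ∂μ = B := by
    rw [hB]
    refine integral_congr_ae ?_
    filter_upwards [ae_restrict_mem measurableSet_Ioo] with t ht
    rw [hrpow]; exact hgsq t ht
  have hhint2 : ∫ a, h a ^ (2:ℝ) ∂μ = C := by
    rw [hC]
    refine integral_congr_ae (Filter.Eventually.of_forall fun t => ?_)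
    show h t ^ (2:ℝ) = Real.exp (y * t ^ 2)
    rw [hrpow]; exact hhsq t
  rw [hgint, hgint2, hhint2] at key
  have hBnn : 0 ≤ B := setIntegral_nonneg measurableSet_Ioo fun t ht =>
    mul_nonneg (hfnn t ht) (Real.exp_pos _).le
  have hCpos : (1:ℝ) ≤ C := by
    have h1 : ∫ t in Set.Ioo (0:ℝ) 1, (1:ℝ) = 1 := by
      simp [Real.volume_Ioo]
    have hmono : ∫ t in Set.Ioo (0:ℝ) 1, (1:ℝ) ≤ ∫ t in Set.Ioo (0:ℝ) 1, Real.exp (y * t ^ 2) := by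
      refine setIntegral_mono_on (integrableOn_const (by simp [Real.volume_Ioo])) hCint measurableSet_Ioo fun t ht => ?_
      exact Real.one_le_exp (by nlinarith [sq_nonneg t])
    rw [hC]; linarith
  have hAnn : 0 ≤ A := setIntegral_nonneg measurableSet_Ioo fun t ht => Real.sqrt_nonneg _
  have hABC : A ^ 2 ≤ B * C := by
    have hkey2 : A ≤ Real.sqrt B * Real.sqrt C := by
      rw [Real.sqrt_eq_rpow, Real.sqrt_eq_rpow]; exact key
    calc A ^ 2 ≤ (Real.sqrt B * Real.sqrt C) ^ 2 := by
          exact pow_le_pow_left₀ hAnn hkey2 2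
      _ = B * C := by
          rw [mul_pow, Real.sq_sqrt hBnn, Real.sq_sqrt (by linarith : (0:ℝ) ≤ C)]
  -- erfi computation
  have hsy : 0 < Real.sqrt y := Real.sqrt_pos.mpr hy
  have hCint' : ∫ t in (0:ℝ)..1, Real.exp (y * t ^ 2) = C := by
    rw [hC, intervalIntegral.integral_of_le zero_le_one, MeasureTheory.integral_Ioc_eq_integral_Ioo]
  have hsub : ∫ t in (0:ℝ)..(Real.sqrt y), Real.exp (t ^ 2) = Real.sqrt y * C := by
    have := intervalIntegral.integral_comp_mul_left (a := (0:ℝ)) (b := 1)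
      (fun u => Real.exp (u ^ 2)) hsy.ne'
    simp only [mul_zero, mul_one] at this
    have heq : ∀ t : ℝ, Real.exp ((Real.sqrt y * t) ^ 2) = Real.exp (y * t ^ 2) := fun t => by
      rw [mul_pow, Real.sq_sqrt hy.le]
    rw [intervalIntegral.integral_congr (g := fun t => Real.exp (y * t ^ 2))
      (fun t _ => heq t)] at this
    rw [hCint'] at this
    rw [smul_eq_mul] at this
    field_simp at this ⊢
    linarith
  have hden : Real.sqrt π * erfi (Real.sqrt y) = 2 * Real.sqrt y * C := by
    rw [erfi, hsub]
    have hπ : Real.sqrt π ≠ 0 := by positivity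
    field_simp
  rw [hden]
  have hCpos' : (0:ℝ) < C := by linarith
  rw [div_le_iff₀ (by positivity)]
  nlinarith [mul_le_mul_of_nonneg_right hABC (by positivity : (0:ℝ) ≤ 2 * Real.sqrt y)]
end
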